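/- With the notation and hypotheses of the integration-by-parts identity for I[γ,φ], one has the uniform bound |I[γ,φ](y,t)| ≤ (|φ(0)| + |φ(t)|)/2 + (1/2)∫_0^t |φ'(τ)| dτ + √(t/π) · max_{τ∈[0,t]} |γ'(τ) φ(τ)|, valid for all y > max_{τ∈[0,t]} γ(τ). -/

import Mathlib

open Real MeasureTheory intervalIntegral

/-- The 1D double-layer heat kernel. -/
noncomputable def dlKernel (x τ : ℝ) : ℝ :=
  x / (4 * Real.sqrt Real.pi * τ ^ ((3:ℝ)/2)) * Real.exp (-x ^ 2 / (4 * τ))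

noncomputable def Efn (u : ℝ) : ℝ := ∫ v in (0:ℝ)..u, Real.exp (-v^2)

noncomputable def Ffn (t y : ℝ) (γ : ℝ → ℝ) (τ : ℝ) : ℝ :=
  (Real.sqrt π)⁻¹ * Efn ((y - γ τ)/(2 * Real.sqrt (t - τ)))

noncomputable def Kfn (t y : ℝ) (γ : ℝ → ℝ) (τ : ℝ) : ℝ :=
  Real.exp (-(y - γ τ)^2 / (4*(t-τ))) / (2*Real.sqrt (π*(t-τ)))

lemma Efn_hasDerivAt (u : ℝ) : HasDerivAt Efn (Real.exp (-u^2)) u :=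
  ((continuous_neg.comp (continuous_pow 2)).rexp.integral_hasStrictDerivAt 0 u).hasDerivAt

lemma Efn_continuous : Continuous Efn :=
  Differentiable.continuous (fun u => (Efn_hasDerivAt u).differentiableAt)


lemma Efn_nonneg {u : ℝ} (hu : 0 ≤ u) : 0 ≤ Efn u :=
  intervalIntegral.integral_nonneg hu (fun v _ => (Real.exp_pos _).le)

lemma Efn_le {u : ℝ} (hu : 0 ≤ u) : Efn u ≤ Real.sqrt π / 2 := by
  have hint : IntegrableOn (fun v : ℝ => Real.exp (-v^2)) (Set.Ioi 0) := by
    have := (integrable_exp_neg_mul_sq (b := 1) one_pos).integrableOn (s := Set.Ioi (0:ℝ))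
    simpa using this
  have h1 : Efn u = ∫ v in Set.Ioc (0:ℝ) u, Real.exp (-v^2) := by
    rw [Efn, intervalIntegral.integral_of_le hu]
  have h2 : (∫ v in Set.Ioc (0:ℝ) u, Real.exp (-v^2)) ≤ ∫ v in Set.Ioi (0:ℝ), Real.exp (-v^2) := by
    apply setIntegral_mono_set hint
    · filter_upwards with v using (Real.exp_pos _).le
    · exact HasSubset.Subset.eventuallyLE Set.Ioc_subset_Ioi_self
  have h3 : (∫ v in Set.Ioi (0:ℝ), Real.exp (-v^2)) = Real.sqrt π / 2 := by
    have := integral_gaussian_Ioi 1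
    simpa using this
  rw [h1, ← h3]; exact h2

lemma Efn_neg (u : ℝ) : Efn (-u) = - Efn u := by
  have : Efn (-u) = ∫ v in (0:ℝ)..(-u), Real.exp (-(-v)^2) := by
    simp [Efn]
  rw [this, intervalIntegral.integral_comp_neg (f := fun v => Real.exp (-v^2))]
  simp [Efn, ← intervalIntegral.integral_symm]

lemma Efn_abs_le (u : ℝ) : |Efn u| ≤ Real.sqrt π / 2 := by
  rcases le_or_gt 0 u with hu | hu
  · rw [abs_of_nonneg (Efn_nonneg hu)]; exact Efn_le hu
  · have h := Efn_le (u := -u) (by linarith)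
    rw [Efn_neg] at h
    have h0 : 0 ≤ Efn (-u) := Efn_nonneg (by linarith)
    rw [Efn_neg] at h0
    rw [abs_of_nonpos (by linarith)]
    linarith

lemma Ffn_abs_le {t y : ℝ} {γ : ℝ → ℝ} (τ : ℝ) : |Ffn t y γ τ| ≤ 1/2 := by
  rw [Ffn, abs_mul, abs_of_nonneg (inv_nonneg.mpr (Real.sqrt_nonneg _))]
  have hπ : 0 < Real.sqrt π := Real.sqrt_pos.mpr Real.pi_pos
  calc (Real.sqrt π)⁻¹ * |Efn _| ≤ (Real.sqrt π)⁻¹ * (Real.sqrt π / 2) := by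
        gcongr
        exact Efn_abs_le _
    _ = 1/2 := by field_simp

lemma rpow_three_halves {s : ℝ} (hs : 0 < s) : s ^ ((3:ℝ)/2) = s * Real.sqrt s := by
  have : ((3:ℝ)/2) = 1 + 1/2 := by norm_num
  rw [this, Real.rpow_add hs, Real.rpow_one, ← Real.sqrt_eq_rpow]

lemma F_hasDerivAt' (t y : ℝ) (γ : ℝ → ℝ) (τ : ℝ) (hτt : τ < t) (g' : ℝ)
    (hg : HasDerivAt γ g' τ) :
    HasDerivAt (fun σ => (Real.sqrt π)⁻¹ * Efn ((y - γ σ)/(2 * Real.sqrt (t - σ))))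
      (dlKernel (y - γ τ) (t - τ)
        - g' * (Real.exp (-(y - γ τ)^2 / (4*(t-τ))) / (2*Real.sqrt (π*(t-τ))))) τ := by
  have hs : (0:ℝ) < t - τ := by linarith
  have hq : (0:ℝ) < Real.sqrt (t - τ) := Real.sqrt_pos.mpr hs
  have hnum : HasDerivAt (fun σ => y - γ σ) (-g') τ := by
    exact ((hasDerivAt_const τ y).sub hg).congr_deriv (zero_sub _)
  have hin : HasDerivAt (fun σ => t - σ) (-1) τ := by
    exact ((hasDerivAt_const τ t).sub (hasDerivAt_id τ)).congr_deriv (zero_sub _)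
  have hsq : HasDerivAt (fun σ => Real.sqrt (t - σ)) (1 / (2 * Real.sqrt (t - τ)) * (-1)) τ :=
    (Real.hasDerivAt_sqrt hs.ne').comp τ hin
  have hden : HasDerivAt (fun σ => 2 * Real.sqrt (t - σ))
      (2 * (1 / (2 * Real.sqrt (t - τ)) * (-1))) τ := hsq.const_mul 2
  have hden0 : 2 * Real.sqrt (t - τ) ≠ 0 := by positivity
  have hu : HasDerivAt (fun σ => (y - γ σ)/(2 * Real.sqrt (t - σ)))
      (((-g') * (2 * Real.sqrt (t - τ)) - (y - γ τ) * (2 * (1 / (2 * Real.sqrt (t - τ)) * (-1))))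
        / (2 * Real.sqrt (t - τ))^2) τ := hnum.div hden hden0
  have hF : HasDerivAt (fun σ => (Real.sqrt π)⁻¹ * Efn ((y - γ σ)/(2 * Real.sqrt (t - σ))))
      ((Real.sqrt π)⁻¹ * (Real.exp (-((y - γ τ)/(2 * Real.sqrt (t - τ)))^2) *
        (((-g') * (2 * Real.sqrt (t - τ)) - (y - γ τ) * (2 * (1 / (2 * Real.sqrt (t - τ)) * (-1))))
        / (2 * Real.sqrt (t - τ))^2))) τ :=
    (((Efn_hasDerivAt _).comp τ hu)).const_mul _
  convert hF using 1
  have hexp : -((y - γ τ)/(2 * Real.sqrt (t - τ)))^2 = -(y - γ τ)^2 / (4*(t-τ)) := by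
    rw [div_pow]
    rw [mul_pow, Real.sq_sqrt hs.le]
    ring
  rw [hexp, dlKernel, rpow_three_halves hs, Real.sqrt_mul Real.pi_pos.le]
  have hπ : Real.sqrt π ≠ 0 := by positivity
  have hq2 : t - τ = (Real.sqrt (t-τ))^2 := (Real.sq_sqrt hs.le).symm
  set A := Real.exp (-(y - γ τ)^2 / (4*(t-τ)))
  set q := Real.sqrt (t - τ)
  rw [hq2]
  field_simp
  ring

lemma F_hasDerivAt (t y : ℝ) (γ : ℝ → ℝ) (τ : ℝ) (hτt : τ < t) (g' : ℝ)
    (hg : HasDerivAt γ g' τ) :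
    HasDerivAt (Ffn t y γ) (dlKernel (y - γ τ) (t - τ) - g' * Kfn t y γ τ) τ :=
  F_hasDerivAt' t y γ τ hτt g' hg

lemma dl_abs_le {x s c : ℝ} (hc : 0 < c) (hcx : c ≤ x) (hs : 0 < s) :
    |dlKernel x s| ≤ 16 * Real.sqrt s / (Real.sqrt π * c^3) := by
  have hx : 0 < x := lt_of_lt_of_le hc hcx
  have hq : 0 < Real.sqrt s := Real.sqrt_pos.mpr hs
  have hπ : 0 < Real.sqrt π := Real.sqrt_pos.mpr Real.pi_pos
  have hz : 0 < x^2/(4*s) := by positivity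
  have hzexp : Real.exp (-(x^2/(4*s))) ≤ 4/(x^2/(4*s))^2 := by
    set z := x^2/(4*s) with hzdef
    have h1 : z/2 + 1 ≤ Real.exp (z/2) := Real.add_one_le_exp _
    have h2 : Real.exp (z/2) * Real.exp (z/2) = Real.exp z := by
      rw [← Real.exp_add]; ring_nf
    have h3 : z^2/4 ≤ Real.exp z := by nlinarith [Real.exp_pos (z/2)]
    have h4 : (Real.exp z)⁻¹ ≤ (z^2/4)⁻¹ := by
      apply inv_anti₀ (by positivity) h3
    rw [Real.exp_neg]
    calc (Real.exp z)⁻¹ ≤ (z^2/4)⁻¹ := h4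
      _ = 4/z^2 := by field_simp
  have hnn : 0 ≤ dlKernel x s := by
    rw [dlKernel]
    have h32 : 0 < s ^ ((3:ℝ)/2) := Real.rpow_pos_of_pos hs _
    positivity
  rw [abs_of_nonneg hnn, dlKernel, rpow_three_halves hs]
  have hxe : -x^2/(4*s) = -(x^2/(4*s)) := by ring
  rw [hxe]
  calc x / (4 * Real.sqrt π * (s * Real.sqrt s)) * Real.exp (-(x^2/(4*s)))
      ≤ x / (4 * Real.sqrt π * (s * Real.sqrt s)) * (4/(x^2/(4*s))^2) := by
        gcongr
    _ = 16 * Real.sqrt s / (Real.sqrt π * x^3) := by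
        have hq2 : s = (Real.sqrt s)^2 := (Real.sq_sqrt hs.le).symm
        field_simp
        linear_combination (-16:ℝ) * (Real.mul_self_sqrt hs.le)
    _ ≤ 16 * Real.sqrt s / (Real.sqrt π * c^3) := by
        gcongr

variable {t y : ℝ} {γ : ℝ → ℝ} {s : Set ℝ}

lemma sub_continuousOn (hs : ∀ τ ∈ s, τ < t) :
    ContinuousOn (fun τ => t - τ) s := continuousOn_const.sub continuousOn_id

lemma dl_continuousOn (hγ : ContinuousOn γ s) (hs : ∀ τ ∈ s, τ < t) :
    ContinuousOn (fun τ => dlKernel (y - γ τ) (t - τ)) s := by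
  have hts : ContinuousOn (fun τ => t - τ) s := sub_continuousOn hs
  have hxc : ContinuousOn (fun τ => y - γ τ) s := continuousOn_const.sub hγ
  have h32 : ContinuousOn (fun τ => (t - τ) ^ ((3:ℝ)/2)) s :=
    hts.rpow_const (fun τ hτ => Or.inl (ne_of_gt (sub_pos.mpr (hs τ hτ))))
  apply ContinuousOn.mul
  · apply ContinuousOn.div hxc (continuousOn_const.mul h32)
    intro τ hτ
    have h := sub_pos.mpr (hs τ hτ)
    have h2 : (0:ℝ) < (t - τ) ^ ((3:ℝ)/2) := Real.rpow_pos_of_pos h _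
    exact mul_ne_zero (mul_ne_zero four_ne_zero (Real.sqrt_pos.mpr Real.pi_pos).ne') h2.ne'
  · apply Real.continuous_exp.comp_continuousOn
    apply ContinuousOn.div ((hxc.pow 2).neg) (continuousOn_const.mul hts)
    intro τ hτ
    have h := sub_pos.mpr (hs τ hτ)
    exact mul_ne_zero four_ne_zero h.ne'

lemma K_continuousOn (hγ : ContinuousOn γ s) (hs : ∀ τ ∈ s, τ < t) :
    ContinuousOn (Kfn t y γ) s := by
  have hts : ContinuousOn (fun τ => t - τ) s := sub_continuousOn hs
  have hxc : ContinuousOn (fun τ => y - γ τ) s := continuousOn_const.sub hγ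
  apply ContinuousOn.div
  · apply Real.continuous_exp.comp_continuousOn
    apply ContinuousOn.div ((hxc.pow 2).neg) (continuousOn_const.mul hts)
    intro τ hτ
    have h := sub_pos.mpr (hs τ hτ)
    exact mul_ne_zero four_ne_zero h.ne'
  · exact continuousOn_const.mul ((continuousOn_const.mul hts).sqrt)
  · intro τ hτ
    have h := sub_pos.mpr (hs τ hτ)
    have : 0 < Real.sqrt (π * (t - τ)) := Real.sqrt_pos.mpr (by positivity)
    positivity

lemma F_continuousOn (hγ : ContinuousOn γ s) (hs : ∀ τ ∈ s, τ < t) :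
    ContinuousOn (Ffn t y γ) s := by
  have hts : ContinuousOn (fun τ => t - τ) s := sub_continuousOn hs
  have hxc : ContinuousOn (fun τ => y - γ τ) s := continuousOn_const.sub hγ
  apply ContinuousOn.mul continuousOn_const
  apply Efn_continuous.comp_continuousOn
  apply ContinuousOn.div hxc (continuousOn_const.mul hts.sqrt)
  intro τ hτ
  have h := sub_pos.mpr (hs τ hτ)
  have : 0 < Real.sqrt (t - τ) := Real.sqrt_pos.mpr h
  exact mul_ne_zero two_ne_zero this.ne'

lemma Kfn_nonneg (hτ : τ < t) : 0 ≤ Kfn t y γ τ := by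
  rw [Kfn]; positivity

lemma Kfn_le {τ : ℝ} (hτ : τ < t) : Kfn t y γ τ ≤ (2 * Real.sqrt (π*(t-τ)))⁻¹ := by
  rw [Kfn]
  have h : 0 < t - τ := by linarith
  have h2 : 0 < Real.sqrt (π * (t - τ)) := Real.sqrt_pos.mpr (by positivity)
  rw [div_le_iff₀ (by positivity)]
  rw [inv_mul_cancel₀ (by positivity : (2 * Real.sqrt (π*(t-τ))) ≠ 0)]
  exact Real.exp_le_one_iff.mpr (by
    apply div_nonpos_of_nonpos_of_nonneg
    · simp [sq_nonneg]
    · linarith)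

lemma integral_inv_sqrt_bound {t b : ℝ} (ht : 0 < t) (hb : 0 < b) (hbt : b < t) :
    ∫ τ in (0:ℝ)..b, (2*Real.sqrt (π*(t-τ)))⁻¹ ≤ Real.sqrt (t/π) := by
  have hlt : ∀ τ ∈ Set.Icc (0:ℝ) b, τ < t := fun τ hτ => lt_of_le_of_lt hτ.2 hbt
  have hπ : 0 < Real.sqrt π := Real.sqrt_pos.mpr Real.pi_pos
  have hcont : ContinuousOn (fun τ => -(Real.sqrt π)⁻¹ * Real.sqrt (t - τ)) (Set.Icc 0 b) :=
    continuousOn_const.mul (sub_continuousOn hlt).sqrt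
  have hderiv : ∀ τ ∈ Set.Ioo (0:ℝ) b, HasDerivAt (fun σ => -(Real.sqrt π)⁻¹ * Real.sqrt (t - σ))
      ((2*Real.sqrt (π*(t-τ)))⁻¹) τ := by
    intro τ hτ
    have hs : 0 < t - τ := by have := hτ.2; linarith
    have hin : HasDerivAt (fun σ => t - σ) (-1) τ := by
      exact ((hasDerivAt_const τ t).sub (hasDerivAt_id τ)).congr_deriv (zero_sub _)
    have hsq : HasDerivAt (fun σ => Real.sqrt (t - σ)) (1 / (2 * Real.sqrt (t - τ)) * (-1)) τ :=
      (Real.hasDerivAt_sqrt hs.ne').comp τ hin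
    have := hsq.const_mul (-(Real.sqrt π)⁻¹)
    refine this.congr_deriv ?_
    rw [Real.sqrt_mul Real.pi_pos.le]
    have hq : 0 < Real.sqrt (t - τ) := Real.sqrt_pos.mpr hs
    field_simp
  have hic : ContinuousOn (fun τ => (2*Real.sqrt (π*(t-τ)))⁻¹) (Set.Icc 0 b) := by
    apply ContinuousOn.inv₀ (continuousOn_const.mul ((continuousOn_const.mul (sub_continuousOn hlt)).sqrt))
    intro τ hτ
    have h := sub_pos.mpr (hlt τ hτ)
    have : 0 < Real.sqrt (π * (t - τ)) := Real.sqrt_pos.mpr (by positivity)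
    exact mul_ne_zero two_ne_zero this.ne'
  have hint : IntervalIntegrable (fun τ => (2*Real.sqrt (π*(t-τ)))⁻¹) volume 0 b := by
    apply ContinuousOn.intervalIntegrable
    rwa [Set.uIcc_of_le hb.le]
  rw [intervalIntegral.integral_eq_sub_of_hasDerivAt_of_le hb.le hcont hderiv hint]
  have h1 : Real.sqrt (t/π) = (Real.sqrt π)⁻¹ * Real.sqrt t := by
    rw [Real.sqrt_div ht.le, div_eq_inv_mul]
  have h2 : 0 ≤ Real.sqrt (t - b) := Real.sqrt_nonneg _
  have h3 : 0 < (Real.sqrt π)⁻¹ := by positivity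
  rw [h1, sub_zero]
  nlinarith [mul_nonneg h3.le h2]

lemma myle_on_closure {a b : ℝ} (hab : a < b) {f : ℝ → ℝ} {M : ℝ}
    (hf : ContinuousOn f (Set.Icc a b)) (h : ∀ x ∈ Set.Ioo a b, f x ≤ M) :
    ∀ x ∈ Set.Icc a b, f x ≤ M := by
  intro x hx
  have hx' : x ∈ closure (Set.Ioo a b) := by rw [closure_Ioo hab.ne]; exact hx
  have hne : (nhdsWithin x (Set.Ioo a b)).NeBot := mem_closure_iff_nhdsWithin_neBot.mp hx'
  have htend : Filter.Tendsto f (nhdsWithin x (Set.Ioo a b)) (nhds (f x)) :=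
    (hf x hx).mono_left (nhdsWithin_mono x Set.Ioo_subset_Icc_self)
  exact le_of_tendsto htend (eventually_nhdsWithin_of_forall h)

/-- Uniform bound for the double-layer heat potential
`I[γ,φ](y,t) = ∫_0^t H(y-γ(τ), t-τ) φ(τ) dτ` with `γ, φ ∈ C¹([0,t])`:
`|I| ≤ (|φ(0)|+|φ(t)|)/2 + (1/2)∫_0^t |φ'| + √(t/π) max |γ'φ|`. -/
theorem double_layer_potential_uniform_bound
    (t : ℝ) (ht : 0 < t) (γ φ : ℝ → ℝ)
    (hγ : ContDiffOn ℝ 1 γ (Set.Icc 0 t)) (hφ : ContDiffOn ℝ 1 φ (Set.Icc 0 t))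
    (y : ℝ) (hy : ∀ τ ∈ Set.Icc 0 t, γ τ < y) :
    |∫ τ in (0:ℝ)..t, dlKernel (y - γ τ) (t - τ) * φ τ| ≤
      (|φ 0| + |φ t|) / 2 + (1/2) * (∫ τ in (0:ℝ)..t, |deriv φ τ|)
        + Real.sqrt (t / Real.pi) *
            sSup ((fun τ => |deriv γ τ * φ τ|) '' Set.Icc 0 t) := by
  have hγc : ContinuousOn γ (Set.Icc 0 t) := hγ.continuousOn
  have hφc : ContinuousOn φ (Set.Icc 0 t) := hφ.continuousOn
  -- lower bound for y - γ
  obtain ⟨τM, hτM, hτMmax⟩ := isCompact_Icc.exists_isMaxOn (Set.nonempty_Icc.mpr ht.le) hγc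
  set c := y - γ τM with hcdef
  have hc : 0 < c := sub_pos.mpr (hy τM hτM)
  have hcle : ∀ τ ∈ Set.Icc 0 t, c ≤ y - γ τ := by
    intro τ hτ
    have := hτMmax hτ
    simp only [hcdef]
    have h2 : γ τ ≤ γ τM := this
    linarith
  -- derivatives
  have hUD : UniqueDiffOn ℝ (Set.Icc (0:ℝ) t) := uniqueDiffOn_Icc ht
  set dγ := derivWithin γ (Set.Icc 0 t) with hdγdef
  set dφ := derivWithin φ (Set.Icc 0 t) with hdφdef
  have hdγc : ContinuousOn dγ (Set.Icc 0 t) := hγ.continuousOn_derivWithin hUD le_rfl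
  have hdφc : ContinuousOn dφ (Set.Icc 0 t) := hφ.continuousOn_derivWithin hUD le_rfl
  have hmemnhds : ∀ τ ∈ Set.Ioo (0:ℝ) t, Set.Icc (0:ℝ) t ∈ nhds τ :=
    fun τ hτ => Icc_mem_nhds hτ.1 hτ.2
  have hγd : ∀ τ ∈ Set.Ioo (0:ℝ) t, HasDerivAt γ (dγ τ) τ := by
    intro τ hτ
    have h1 := ((hγ.differentiableOn one_ne_zero) τ (Set.Ioo_subset_Icc_self hτ)).differentiableAt
      (hmemnhds τ hτ)
    have h2 := h1.hasDerivAt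
    rwa [hdγdef, derivWithin_of_mem_nhds (hmemnhds τ hτ)]
  have hφd : ∀ τ ∈ Set.Ioo (0:ℝ) t, HasDerivAt φ (dφ τ) τ := by
    intro τ hτ
    have h1 := ((hφ.differentiableOn one_ne_zero) τ (Set.Ioo_subset_Icc_self hτ)).differentiableAt
      (hmemnhds τ hτ)
    have h2 := h1.hasDerivAt
    rwa [hdφdef, derivWithin_of_mem_nhds (hmemnhds τ hτ)]
  have hγeq : ∀ τ ∈ Set.Ioo (0:ℝ) t, deriv γ τ = dγ τ := by
    intro τ hτ; rw [hdγdef, derivWithin_of_mem_nhds (hmemnhds τ hτ)]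
  have hφeq : ∀ τ ∈ Set.Ioo (0:ℝ) t, deriv φ τ = dφ τ := by
    intro τ hτ; rw [hdφdef, derivWithin_of_mem_nhds (hmemnhds τ hτ)]
  -- the sup M
  set M := sSup ((fun τ => |deriv γ τ * φ τ|) '' Set.Icc 0 t) with hMdef
  have hbddS : BddAbove ((fun τ => |deriv γ τ * φ τ|) '' Set.Icc 0 t) := by
    have h1 : BddAbove ((fun τ => |dγ τ * φ τ|) '' Set.Icc 0 t) :=
      (isCompact_Icc.image_of_continuousOn ((hdγc.mul hφc).abs)).bddAbove
    have h2 : BddAbove ((fun τ => |deriv γ τ * φ τ|) '' ({0, t} : Set ℝ)) :=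
      (Set.Finite.image _ ((Set.finite_singleton t).insert 0)).bddAbove
    apply BddAbove.mono _ (h1.union h2)
    rintro _ ⟨τ, hτ, rfl⟩
    by_cases hio : τ ∈ Set.Ioo (0:ℝ) t
    · left
      exact ⟨τ, hτ, by
        show |dγ τ * φ τ| = |deriv γ τ * φ τ|
        rw [hγeq τ hio]⟩
    · right
      refine ⟨τ, ?_, rfl⟩
      rcases eq_or_lt_of_le hτ.1 with h | h
      · exact Or.inl h.symm
      rcases eq_or_lt_of_le hτ.2 with h' | h'
      · exact Or.inr h'
      · exact absurd ⟨h, h'⟩ hio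
  have hMle : ∀ τ ∈ Set.Icc (0:ℝ) t, |deriv γ τ * φ τ| ≤ M :=
    fun τ hτ => le_csSup hbddS ⟨τ, hτ, rfl⟩
  have hM0 : 0 ≤ M := le_trans (abs_nonneg _) (hMle 0 ⟨le_rfl, ht.le⟩)
  have hMd : ∀ τ ∈ Set.Icc (0:ℝ) t, |dγ τ * φ τ| ≤ M := by
    apply myle_on_closure ht ((hdγc.mul hφc).abs)
    intro τ hτ
    rw [Pi.mul_apply, ← hγeq τ hτ]
    exact hMle τ (Set.Ioo_subset_Icc_self hτ)
  -- φ bound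
  obtain ⟨Cφ, hCφ⟩ := isCompact_Icc.exists_bound_of_continuousOn hφc
  -- integrand and its integrability on [0, t]
  set f := fun τ => dlKernel (y - γ τ) (t - τ) * φ τ with hfdef
  have hfc : ContinuousOn f (Set.Ioo 0 t) :=
    (dl_continuousOn (hγc.mono Set.Ioo_subset_Icc_self) (fun τ hτ => hτ.2)).mul
      (hφc.mono Set.Ioo_subset_Icc_self)
  have hfbd : ∀ τ ∈ Set.Ioo (0:ℝ) t, ‖f τ‖ ≤ 16 * Real.sqrt t / (Real.sqrt π * c^3) * Cφ := by
    intro τ hτ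
    have hτI : τ ∈ Set.Icc (0:ℝ) t := Set.Ioo_subset_Icc_self hτ
    have h1 : |dlKernel (y - γ τ) (t - τ)| ≤ 16 * Real.sqrt (t-τ) / (Real.sqrt π * c^3) :=
      dl_abs_le hc (hcle τ hτI) (by have := hτ.2; linarith)
    have h2 : |φ τ| ≤ Cφ := hCφ τ hτI
    have h3 : Real.sqrt (t - τ) ≤ Real.sqrt t := Real.sqrt_le_sqrt (by have := hτ.1; linarith)
    have hπ : 0 < Real.sqrt π := Real.sqrt_pos.mpr Real.pi_pos
    rw [Real.norm_eq_abs, hfdef, abs_mul]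
    have h4 : |dlKernel (y - γ τ) (t - τ)| ≤ 16 * Real.sqrt t / (Real.sqrt π * c^3) := by
      apply le_trans h1
      gcongr
    exact mul_le_mul h4 h2 (abs_nonneg _) (by positivity)
  have hfint : IntervalIntegrable f volume 0 t := by
    rw [intervalIntegrable_iff_integrableOn_Ioc_of_le ht.le,
      integrableOn_Ioc_iff_integrableOn_Ioo]
    exact ⟨hfc.aestronglyMeasurable measurableSet_Ioo,
      HasFiniteIntegral.restrict_of_bounded _ measure_Ioo_lt_top
        ((ae_restrict_iff' measurableSet_Ioo).mpr (Filter.Eventually.of_forall hfbd))⟩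
  -- rewrite deriv φ integral
  have hφint : (∫ τ in (0:ℝ)..t, |deriv φ τ|) = ∫ τ in (0:ℝ)..t, |dφ τ| := by
    apply intervalIntegral.integral_congr_ae
    have h : ∀ᵐ (x:ℝ), x ≠ t := by
      rw [MeasureTheory.ae_iff]
      simp only [ne_eq, not_not, Set.setOf_eq_eq_singleton]
      exact Real.volume_singleton
    filter_upwards [h] with τ hτ hτ2
    rw [Set.uIoc_of_le ht.le] at hτ2
    have hio : τ ∈ Set.Ioo (0:ℝ) t := ⟨hτ2.1, lt_of_le_of_ne hτ2.2 hτ⟩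
    rw [hφeq τ hio]
  rw [hφint]
  -- the key estimate for b < t
  have key : ∀ b ∈ Set.Ioo (0:ℝ) t, |∫ τ in (0:ℝ)..b, f τ| ≤
      (|φ 0| + |φ b|) / 2 + ((1/2) * (∫ τ in (0:ℝ)..t, |dφ τ|) + Real.sqrt (t / π) * M) := by
    intro b hb
    obtain ⟨hb0, hbt⟩ := hb
    have hsub : Set.Icc (0:ℝ) b ⊆ Set.Icc 0 t := Set.Icc_subset_Icc le_rfl hbt.le
    have hlt : ∀ τ ∈ Set.Icc (0:ℝ) b, τ < t := fun τ hτ => lt_of_le_of_lt hτ.2 hbt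
    have hγb := hγc.mono hsub
    have hφb := hφc.mono hsub
    have hFc : ContinuousOn (Ffn t y γ) (Set.Icc 0 b) := F_continuousOn hγb hlt
    have hKc : ContinuousOn (Kfn t y γ) (Set.Icc 0 b) := K_continuousOn hγb hlt
    have hdlc : ContinuousOn (fun τ => dlKernel (y - γ τ) (t - τ)) (Set.Icc 0 b) :=
      dl_continuousOn hγb hlt
    -- FTC
    have hgc : ContinuousOn (fun σ => Ffn t y γ σ * φ σ) (Set.Icc 0 b) := hFc.mul hφb
    have hgderiv : ∀ τ ∈ Set.Ioo (0:ℝ) b, HasDerivAt (fun σ => Ffn t y γ σ * φ σ)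
        (f τ - dγ τ * Kfn t y γ τ * φ τ + Ffn t y γ τ * dφ τ) τ := by
      intro τ hτ
      have hτt : τ ∈ Set.Ioo (0:ℝ) t := ⟨hτ.1, hτ.2.trans hbt⟩
      have h1 := F_hasDerivAt t y γ τ hτt.2 (dγ τ) (hγd τ hτt)
      have h2 := (h1.mul (hφd τ hτt))
      refine h2.congr_deriv ?_
      rw [hfdef]
      ring
    have hG'c : ContinuousOn (fun τ => f τ - dγ τ * Kfn t y γ τ * φ τ + Ffn t y γ τ * dφ τ)
        (Set.Icc 0 b) :=
      (((hdlc.mul hφb).sub (((hdγc.mono hsub).mul hKc).mul hφb)).add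
        (hFc.mul (hdφc.mono hsub)))
    have hG'int : IntervalIntegrable
        (fun τ => f τ - dγ τ * Kfn t y γ τ * φ τ + Ffn t y γ τ * dφ τ) volume 0 b := by
      apply ContinuousOn.intervalIntegrable; rwa [Set.uIcc_of_le hb0.le]
    have hFTC := intervalIntegral.integral_eq_sub_of_hasDerivAt_of_le hb0.le hgc hgderiv hG'int
    -- split
    have hint1 : IntervalIntegrable f volume 0 b := by
      apply ContinuousOn.intervalIntegrable
      rw [Set.uIcc_of_le hb0.le]; exact hdlc.mul hφb
    have hint2 : IntervalIntegrable (fun τ => dγ τ * Kfn t y γ τ * φ τ) volume 0 b := by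
      apply ContinuousOn.intervalIntegrable
      rw [Set.uIcc_of_le hb0.le]; exact ((hdγc.mono hsub).mul hKc).mul hφb
    have hint3 : IntervalIntegrable (fun τ => Ffn t y γ τ * dφ τ) volume 0 b := by
      apply ContinuousOn.intervalIntegrable
      rw [Set.uIcc_of_le hb0.le]; exact hFc.mul (hdφc.mono hsub)
    have hsplit : (∫ τ in (0:ℝ)..b, (f τ - dγ τ * Kfn t y γ τ * φ τ + Ffn t y γ τ * dφ τ))
        = (∫ τ in (0:ℝ)..b, f τ) - (∫ τ in (0:ℝ)..b, dγ τ * Kfn t y γ τ * φ τ)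
          + ∫ τ in (0:ℝ)..b, Ffn t y γ τ * dφ τ := by
      rw [intervalIntegral.integral_add (hint1.sub hint2) hint3,
        intervalIntegral.integral_sub hint1 hint2]
    have hf_eq : (∫ τ in (0:ℝ)..b, f τ)
        = (Ffn t y γ b * φ b - Ffn t y γ 0 * φ 0)
          + (∫ τ in (0:ℝ)..b, dγ τ * Kfn t y γ τ * φ τ)
          - ∫ τ in (0:ℝ)..b, Ffn t y γ τ * dφ τ := by
      rw [← hFTC, hsplit]; ring
    -- bounds
    have hb1 : |Ffn t y γ b * φ b - Ffn t y γ 0 * φ 0| ≤ (|φ 0| + |φ b|) / 2 := by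
      have e1 : |Ffn t y γ b * φ b| ≤ (1/2) * |φ b| := by
        rw [abs_mul]
        apply mul_le_mul_of_nonneg_right (Ffn_abs_le b) (abs_nonneg _)
      have e2 : |Ffn t y γ 0 * φ 0| ≤ (1/2) * |φ 0| := by
        rw [abs_mul]
        apply mul_le_mul_of_nonneg_right (Ffn_abs_le 0) (abs_nonneg _)
      have := abs_sub (Ffn t y γ b * φ b) (Ffn t y γ 0 * φ 0)
      linarith [abs_sub_abs_le_abs_sub (Ffn t y γ b * φ b) (Ffn t y γ 0 * φ 0),
        abs_sub (Ffn t y γ b * φ b) (Ffn t y γ 0 * φ 0)]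
    have hb2 : |∫ τ in (0:ℝ)..b, dγ τ * Kfn t y γ τ * φ τ| ≤ Real.sqrt (t / π) * M := by
      have hptwise : ∀ τ ∈ Set.Icc (0:ℝ) b, |dγ τ * Kfn t y γ τ * φ τ|
          ≤ M * (2 * Real.sqrt (π*(t-τ)))⁻¹ := by
        intro τ hτ
        have hτt : τ < t := hlt τ hτ
        have hK0 : 0 ≤ Kfn t y γ τ := Kfn_nonneg hτt
        have : |dγ τ * Kfn t y γ τ * φ τ| = |dγ τ * φ τ| * Kfn t y γ τ := by
          rw [show dγ τ * Kfn t y γ τ * φ τ = (dγ τ * φ τ) * Kfn t y γ τ by ring,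
            abs_mul, abs_of_nonneg hK0]
        rw [this]
        apply mul_le_mul (hMd τ (hsub hτ)) (Kfn_le hτt) hK0 hM0
      have hintk : IntervalIntegrable (fun τ => M * (2 * Real.sqrt (π*(t-τ)))⁻¹) volume 0 b := by
        apply ContinuousOn.intervalIntegrable
        rw [Set.uIcc_of_le hb0.le]
        apply continuousOn_const.mul
        apply ContinuousOn.inv₀
        · exact continuousOn_const.mul
            ((continuousOn_const.mul (continuousOn_const.sub continuousOn_id)).sqrt)
        · intro τ hτ
          have h := sub_pos.mpr (hlt τ hτ)
          have : 0 < Real.sqrt (π * (t - τ)) := Real.sqrt_pos.mpr (by positivity)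
          positivity
      calc |∫ τ in (0:ℝ)..b, dγ τ * Kfn t y γ τ * φ τ|
          ≤ ∫ τ in (0:ℝ)..b, |dγ τ * Kfn t y γ τ * φ τ| :=
            intervalIntegral.abs_integral_le_integral_abs hb0.le
        _ ≤ ∫ τ in (0:ℝ)..b, M * (2 * Real.sqrt (π*(t-τ)))⁻¹ :=
            intervalIntegral.integral_mono_on hb0.le hint2.abs hintk hptwise
        _ = M * ∫ τ in (0:ℝ)..b, (2 * Real.sqrt (π*(t-τ)))⁻¹ := by
            rw [← intervalIntegral.integral_const_mul]
        _ ≤ M * Real.sqrt (t / π) :=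
            mul_le_mul_of_nonneg_left (integral_inv_sqrt_bound ht hb0 hbt) hM0
        _ = Real.sqrt (t / π) * M := mul_comm _ _
    have hb3 : |∫ τ in (0:ℝ)..b, Ffn t y γ τ * dφ τ|
        ≤ (1/2) * ∫ τ in (0:ℝ)..t, |dφ τ| := by
      have hintd : IntervalIntegrable (fun τ => |dφ τ|) volume 0 t := by
        apply ContinuousOn.intervalIntegrable
        rw [Set.uIcc_of_le ht.le]; exact hdφc.abs
      have hptwise : ∀ τ ∈ Set.Icc (0:ℝ) b, |Ffn t y γ τ * dφ τ| ≤ (1/2) * |dφ τ| := by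
        intro τ hτ
        rw [abs_mul]
        apply mul_le_mul_of_nonneg_right (Ffn_abs_le τ) (abs_nonneg _)
      have hinth : IntervalIntegrable (fun τ => (1/2) * |dφ τ|) volume 0 b := by
        apply ContinuousOn.intervalIntegrable
        rw [Set.uIcc_of_le hb0.le]
        exact continuousOn_const.mul ((hdφc.mono hsub).abs)
      calc |∫ τ in (0:ℝ)..b, Ffn t y γ τ * dφ τ|
          ≤ ∫ τ in (0:ℝ)..b, |Ffn t y γ τ * dφ τ| :=
            intervalIntegral.abs_integral_le_integral_abs hb0.le
        _ ≤ ∫ τ in (0:ℝ)..b, (1/2) * |dφ τ| :=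
            intervalIntegral.integral_mono_on hb0.le hint3.abs hinth hptwise
        _ = (1/2) * ∫ τ in (0:ℝ)..b, |dφ τ| := by
            rw [← intervalIntegral.integral_const_mul]
        _ ≤ (1/2) * ∫ τ in (0:ℝ)..t, |dφ τ| := by
            apply mul_le_mul_of_nonneg_left _ (by norm_num)
            apply intervalIntegral.integral_mono_interval le_rfl hb0.le hbt.le
            · filter_upwards with τ using abs_nonneg _
            · exact hintd
    calc |∫ τ in (0:ℝ)..b, f τ|
        = |(Ffn t y γ b * φ b - Ffn t y γ 0 * φ 0)
            + (∫ τ in (0:ℝ)..b, dγ τ * Kfn t y γ τ * φ τ)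
            - ∫ τ in (0:ℝ)..b, Ffn t y γ τ * dφ τ| := by rw [hf_eq]
      _ ≤ |Ffn t y γ b * φ b - Ffn t y γ 0 * φ 0|
            + |∫ τ in (0:ℝ)..b, dγ τ * Kfn t y γ τ * φ τ|
            + |∫ τ in (0:ℝ)..b, Ffn t y γ τ * dφ τ| := by
          set X1 := Ffn t y γ b * φ b - Ffn t y γ 0 * φ 0
          set X2 := ∫ τ in (0:ℝ)..b, dγ τ * Kfn t y γ τ * φ τ
          set X3 := ∫ τ in (0:ℝ)..b, Ffn t y γ τ * dφ τ
          calc |X1 + X2 - X3| ≤ |X1 + X2| + |X3| := abs_sub _ _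
            _ ≤ |X1| + |X2| + |X3| := by linarith [abs_add_le X1 X2]
      _ ≤ (|φ 0| + |φ b|) / 2 + ((1/2) * (∫ τ in (0:ℝ)..t, |dφ τ|) + Real.sqrt (t / π) * M) := by
          linarith
  -- pass to the limit b → t
  have hPcont : ContinuousOn (fun b => ∫ τ in (0:ℝ)..b, f τ) (Set.Icc 0 t) := by
    have := intervalIntegral.continuousOn_primitive_interval' hfint
      (Set.left_mem_uIcc (a := (0:ℝ)) (b := t))
    rwa [Set.uIcc_of_le ht.le] at this
  have hne : (nhdsWithin t (Set.Ioo (0:ℝ) t)).NeBot := by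
    rw [← mem_closure_iff_nhdsWithin_neBot, closure_Ioo ht.ne]
    exact ⟨ht.le, le_rfl⟩
  have htmem : t ∈ Set.Icc (0:ℝ) t := ⟨ht.le, le_rfl⟩
  have hLHS : Filter.Tendsto (fun b => |∫ τ in (0:ℝ)..b, f τ|)
      (nhdsWithin t (Set.Ioo 0 t)) (nhds (|∫ τ in (0:ℝ)..t, f τ|)) :=
    (((hPcont t htmem).mono Set.Ioo_subset_Icc_self)).abs
  have hRHS : Filter.Tendsto
      (fun b => (|φ 0| + |φ b|) / 2
        + ((1/2) * (∫ τ in (0:ℝ)..t, |dφ τ|) + Real.sqrt (t / π) * M))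
      (nhdsWithin t (Set.Ioo 0 t))
      (nhds ((|φ 0| + |φ t|) / 2
        + ((1/2) * (∫ τ in (0:ℝ)..t, |dφ τ|) + Real.sqrt (t / π) * M))) := by
    have hφt : Filter.Tendsto φ (nhdsWithin t (Set.Ioo 0 t)) (nhds (φ t)) :=
      ((hφc t htmem).mono Set.Ioo_subset_Icc_self)
    exact (((tendsto_const_nhds.add hφt.abs).div_const 2).add tendsto_const_nhds)
  haveI := hne
  have hfinal := le_of_tendsto_of_tendsto hLHS hRHS (eventually_nhdsWithin_of_forall key)
  linarith
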